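/- arXiv:1909.07905 — 3 statements merged into one kernel-verified Lean document; each statement's English description precedes it below -/
import Mathlib

section
/- Let H ⊆ [0,1] be closed with 0, 1 ∈ H, perfect, nonempty, and of Lebesgue measure zero. Then there is a continuous, non-decreasing function f : ℝ → ℝ with f = 0 on (−∞, 0], f = 1 on [1, ∞), f locally constant on ℝ \ H, and f not constant on any open interval meeting H. -/
open Set MeasureTheory Pointwise

abbrev Plane := ℝ × ℝ

/-- An origin-symmetric convex body in the plane: compact, convex,
nonempty interior, symmetric about the origin. -/
def IsSymmConvexBody (K : Set Plane) : Prop :=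
  Convex ℝ K ∧ IsCompact K ∧ (interior K).Nonempty ∧ K = -K

/-- Birkhoff orthogonality with respect to the norm induced by `K`
(whose Minkowski functional is `gauge K`). -/
def BOrth (K : Set Plane) (x y : Plane) : Prop :=
  ∀ t : ℝ, gauge K x ≤ gauge K (x + t • y)

/-- The set of Auerbach points of `K`. -/
def Auerbach (K : Set Plane) : Set Plane :=
  {x | x ∈ frontier K ∧ ∃ y ∈ frontier K, BOrth K x y ∧ BOrth K y x}

/-- `E(K)`: the union of the open non-degenerate segments contained in `∂K`. -/
def SegUnion (K : Set Plane) : Set Plane :=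
  {x | ∃ a b : Plane, a ≠ b ∧ segment ℝ a b ⊆ frontier K ∧ x ∈ openSegment ℝ a b}

/-- A closed antipode-free arc of `∂K` with endpoints `x` and `y`:
a closed connected subset of `∂K` containing `x` and `y`, containing no
pair of antipodal points, and minimal with these properties. -/
def IsBArc (K C : Set Plane) (x y : Plane) : Prop :=
  C ⊆ frontier K ∧ IsClosed C ∧ IsPreconnected C ∧ x ∈ C ∧ y ∈ C ∧
  (∀ z ∈ C, -z ∉ C) ∧
  ∀ C' ⊆ C, IsClosed C' → IsPreconnected C' → x ∈ C' → y ∈ C' → C' = C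

/-- An angular measure on `∂K`. -/
def IsAngularMeasure (K : Set Plane) (μ : Measure Plane) : Prop :=
  μ (frontier K) = ENNReal.ofReal (2 * Real.pi) ∧
  μ (frontier K)ᶜ = 0 ∧
  (∀ X : Set Plane, μ (-X) = μ X) ∧
  (∀ x : Plane, μ {x} = 0)

/-- A B-measure: an angular measure giving `π/2` to every closed
antipode-free arc whose endpoints are Birkhoff orthogonal. -/
def IsBMeasure (K : Set Plane) (μ : Measure Plane) : Prop :=
  IsAngularMeasure K μ ∧
  ∀ C x y, IsBArc K C x y → BOrth K x y → μ C = ENNReal.ofReal (Real.pi / 2)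

/-- The support of a Borel measure: the points all of whose open
neighborhoods have positive measure. -/
def msupp {α : Type*} [TopologicalSpace α] [MeasurableSpace α]
    (μ : Measure α) : Set α :=
  {x | ∀ U : Set α, IsOpen U → x ∈ U → 0 < μ U}

section CantorAux
open Filter Topology

open Classical in
lemma not_countable_cantor : ¬ Countable (ℕ → Bool) := by
  intro h
  obtain ⟨f, hf⟩ := (countable_iff_exists_injective (ℕ → Bool)).mp h
  have hg : Function.Injective (fun s : Set ℕ => fun n => decide (n ∈ s)) := by
    intro s t hst
    ext n
    simpa using congrFun hst n
  exact Function.cantor_injective _ (hf.comp hg)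

lemma aux_blk (K : Set ℝ) (hK : Perfect K) (hne : K.Nonempty) :
    ∃ ν : Measure ℝ, ν univ = 1 ∧ (∀ x : ℝ, ν {x} = 0) ∧ ν Kᶜ = 0 := by
  haveI : PolishSpace K := hK.closed.polishSpace
  have hKu : ¬Countable ↥K := by
    obtain ⟨g, hgK, _, hginj⟩ := hK.exists_nat_bool_injection hne
    intro hcnt
    exact not_countable_cantor
      (Function.Injective.countable (f := fun c => (⟨g c, hgK (mem_range_self c)⟩ : K))
        (fun a b hab => hginj (congrArg Subtype.val hab)))
  have e : ℝ ≃ᵐ ↥K :=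
    PolishSpace.measurableEquivOfNotCountable
      (fun h => Cardinal.not_countable_real (@Set.countable_univ _ h)) hKu
  have hm : Measurable (fun t : ℝ => (e t : ℝ)) := measurable_subtype_coe.comp e.measurable
  have hinj : Function.Injective (fun t : ℝ => (e t : ℝ)) :=
    fun a b hab => e.injective (Subtype.val_injective hab)
  refine ⟨Measure.map (fun t : ℝ => (e t : ℝ)) (volume.restrict (Icc 0 1)), ?_, ?_, ?_⟩
  · rw [Measure.map_apply hm MeasurableSet.univ, preimage_univ, Measure.restrict_apply_univ,
      Real.volume_Icc]
    norm_num
  · intro x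
    rw [Measure.map_apply hm (measurableSet_singleton x),
      Measure.restrict_apply (hm (measurableSet_singleton x))]
    refine measure_mono_null inter_subset_left ?_
    exact Set.Subsingleton.measure_zero (fun a ha b hb => hinj (ha.trans hb.symm)) _
  · rw [Measure.map_apply hm hK.closed.measurableSet.compl]
    convert measure_empty
    · ext t; simp [(e t).2]
    · infer_instance

lemma cdf_diff (μ : Measure ℝ) [IsFiniteMeasure μ] {u v : ℝ} (huv : u ≤ v) :
    (μ (Iic v)).toReal - (μ (Iic u)).toReal = (μ (Ioc u v)).toReal := by
  have h : μ (Iic v) = μ (Iic u) + μ (Ioc u v) := by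
    rw [← Iic_union_Ioc_eq_Iic huv]
    exact measure_union (Iic_disjoint_Ioc le_rfl) measurableSet_Ioc
  rw [h, ENNReal.toReal_add (measure_ne_top μ _) (measure_ne_top μ _)]
  ring

lemma one_div_anti {a b : ℕ} (hab : a ≤ b) : (1:ℝ)/(b+1) ≤ 1/(a+1) := by
  apply one_div_le_one_div_of_le
  · positivity
  · exact_mod_cast by linarith

lemma aux_cont (μ : Measure ℝ) [IsFiniteMeasure μ] (h : ∀ x : ℝ, μ {x} = 0) :
    Continuous fun x => (μ (Iic x)).toReal := by
  rw [continuous_iff_continuousAt]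
  intro x
  rw [Metric.continuousAt_iff]
  intro ε hε
  have hmono : Monotone fun x : ℝ => (μ (Iic x)).toReal := fun a b hab =>
    ENNReal.toReal_mono (measure_ne_top μ _) (measure_mono (Iic_subset_Iic.mpr hab))
  have hR : Tendsto (fun n : ℕ => μ (Ioc x (x + 1/(n+1)))) atTop (𝓝 0) := by
    have hi : ⋂ n : ℕ, Ioc x (x + 1/(n+1)) = ∅ := by
      rw [eq_empty_iff_forall_notMem]
      intro y hy
      simp only [mem_iInter, mem_Ioc] at hy
      obtain ⟨n, hn⟩ := exists_nat_one_div_lt (sub_pos.mpr (hy 0).1)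
      exact absurd ((hy n).2) (by linarith)
    have := tendsto_measure_iInter_atTop (μ := μ) (s := fun n : ℕ => Ioc x (x + 1/(n+1)))
      (fun n : ℕ => measurableSet_Ioc.nullMeasurableSet)
      (fun a b hab => Ioc_subset_Ioc le_rfl (by linarith [one_div_anti hab]))
      ⟨0, measure_ne_top μ _⟩
    rw [hi] at this
    simpa [Function.comp_def] using this
  have hL : Tendsto (fun n : ℕ => μ (Ioc (x - 1/(n+1)) x)) atTop (𝓝 0) := by
    have hi : ⋂ n : ℕ, Ioc (x - 1/(n+1)) x = {x} := by
      ext y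
      simp only [mem_iInter, mem_Ioc, mem_singleton_iff]
      constructor
      · intro hcon
        by_contra hne
        have hxy : y < x := lt_of_le_of_ne (hcon 0).2 hne
        obtain ⟨n, hn⟩ := exists_nat_one_div_lt (sub_pos.mpr hxy)
        exact absurd ((hcon n).1) (by linarith)
      · rintro rfl
        refine fun n => ⟨?_, le_rfl⟩
        have : (0:ℝ) < 1/(n+1) := by positivity
        linarith
    have := tendsto_measure_iInter_atTop (μ := μ) (s := fun n : ℕ => Ioc (x - 1/(n+1)) x)
      (fun n : ℕ => measurableSet_Ioc.nullMeasurableSet)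
      (fun a b hab => Ioc_subset_Ioc (by linarith [one_div_anti hab]) le_rfl)
      ⟨0, measure_ne_top μ _⟩
    rw [hi, h x] at this
    exact this
  obtain ⟨n₁, hn₁⟩ := (hR.eventually_lt_const
    (show (0:ENNReal) < ENNReal.ofReal ε by simp [hε])).exists
  obtain ⟨n₂, hn₂⟩ := (hL.eventually_lt_const
    (show (0:ENNReal) < ENNReal.ofReal ε by simp [hε])).exists
  refine ⟨min (1/(n₁+1)) (1/(n₂+1)), by positivity, fun {y} hy => ?_⟩
  rw [Real.dist_eq] at hy ⊢
  rcases le_total x y with hxy | hxy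
  · rw [abs_of_nonneg (by linarith [hmono hxy]), cdf_diff μ hxy]
    refine lt_of_le_of_lt (ENNReal.toReal_mono (measure_ne_top μ _)
      (measure_mono (Ioc_subset_Ioc le_rfl ?_))) (ENNReal.toReal_lt_of_lt_ofReal hn₁)
    have := abs_lt.mp (lt_of_lt_of_le hy (min_le_left _ _))
    linarith [this.2]
  · rw [abs_sub_comm, abs_of_nonneg (by linarith [hmono hxy]), cdf_diff μ hxy]
    refine lt_of_le_of_lt (ENNReal.toReal_mono (measure_ne_top μ _)
      (measure_mono (Ioc_subset_Ioc ?_ le_rfl))) (ENNReal.toReal_lt_of_lt_ofReal hn₂)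
    have := abs_lt.mp (lt_of_lt_of_le hy (min_le_right _ _))
    linarith [this.1]

end CantorAux

/-- The Cantor-like distribution function for a perfect null set `H`
containing `0` and `1`. -/
theorem stmt_15 (H : Set ℝ) (hH1 : H ⊆ Icc (0:ℝ) 1) (hc : IsClosed H)
    (h0 : (0:ℝ) ∈ H) (h1 : (1:ℝ) ∈ H) (hperf : Perfect H)
    (hnull : volume H = 0) :
    ∃ f : ℝ → ℝ, Continuous f ∧ Monotone f ∧
      (∀ x : ℝ, x ≤ 0 → f x = 0) ∧ (∀ x : ℝ, 1 ≤ x → f x = 1) ∧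
      (∀ x ∉ H, ∃ U : Set ℝ, IsOpen U ∧ x ∈ U ∧ ∀ y ∈ U, f y = f x) ∧
      (∀ a b : ℝ, a < b → (Ioo a b ∩ H).Nonempty →
        ∃ u ∈ Ioo a b, ∃ v ∈ Ioo a b, f u ≠ f v) := by
  classical
  obtain ⟨pr, hpr⟩ := exists_surjective_nat (ℚ × ℚ)
  have key : ∀ n : ℕ, ∃ ν : Measure ℝ, ν univ ≤ 1 ∧ (∀ x : ℝ, ν {x} = 0) ∧ ν Hᶜ = 0 ∧
      ((H ∩ Ioo ((pr n).1 : ℝ) ((pr n).2 : ℝ)).Nonempty →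
        ν (Ioc ((pr n).1 : ℝ) ((pr n).2 : ℝ)) = 1) := by
    intro n
    by_cases hP : (H ∩ Ioo ((pr n).1 : ℝ) ((pr n).2 : ℝ)).Nonempty
    · set p : ℝ := ((pr n).1 : ℝ)
      set q : ℝ := ((pr n).2 : ℝ)
      obtain ⟨t, htH, htpq⟩ := hP
      have hpq : p < q := lt_trans htpq.1 htpq.2
      have hpre : Preperfect (Ioo p q ∩ H) := hperf.acc.open_inter isOpen_Ioo
      set K : Set ℝ := closure (Ioo p q ∩ H) with hKdef
      have hKperf : Perfect K := hpre.perfect_closure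
      have hKne : K.Nonempty := closure_nonempty_iff.mpr ⟨t, htpq, htH⟩
      obtain ⟨ν, hν1, hν2, hν3⟩ := aux_blk K hKperf hKne
      have hKH : K ⊆ H :=
        (closure_mono inter_subset_right).trans hc.closure_eq.subset
      have hKIcc : K ⊆ Icc p q := by
        rw [hKdef, ← closure_Ioo (ne_of_lt hpq)]
        exact closure_mono inter_subset_left
      refine ⟨ν, le_of_eq hν1, hν2, ?_, fun _ => ?_⟩
      · exact measure_mono_null (compl_subset_compl.mpr hKH) hν3
      · have hcompl : ν (Ioc p q)ᶜ = 0 := by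
          refine measure_mono_null (fun s hs => ?_) (measure_union_null hν3 (hν2 p))
          by_cases hsK : s ∈ K
          · have := hKIcc hsK
            have hsp : s = p := by
              rcases eq_or_lt_of_le this.1 with heq | hlt
              · exact heq.symm
              · exact absurd ⟨hlt, this.2⟩ hs
            exact Or.inr (by simp [hsp])
          · exact Or.inl hsK
        have hle : ν univ ≤ ν (Ioc p q) + ν (Ioc p q)ᶜ := by
          rw [← union_compl_self (Ioc p q)] at *
          exact measure_union_le _ _
        rw [hν1, hcompl, add_zero] at hle
        exact le_antisymm (hν1 ▸ measure_mono (subset_univ _)) hle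
    · exact ⟨0, by simp, by simp, by simp, fun h => absurd h hP⟩
  choose ν hν1 hν2 hν3 hν4 using key
  set μ : Measure ℝ := Measure.sum (fun n => ((2:ENNReal)⁻¹ ^ n) • ν n) with hμdef
  have hμapp : ∀ s : Set ℝ, MeasurableSet s → μ s = ∑' n, (2:ENNReal)⁻¹ ^ n * ν n s := by
    intro s hs
    rw [hμdef, Measure.sum_apply _ hs]
    simp [Measure.smul_apply, smul_eq_mul]
  have hgeo : (∑' n : ℕ, (2:ENNReal)⁻¹ ^ n) = 2 := by
    rw [ENNReal.tsum_geometric]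
    simp [ENNReal.one_sub_inv_two]
  have hμuniv : μ univ ≤ 2 := by
    rw [hμapp univ MeasurableSet.univ]
    refine le_trans (ENNReal.tsum_le_tsum (fun n => ?_)) hgeo.le
    calc (2:ENNReal)⁻¹ ^ n * ν n univ ≤ (2:ENNReal)⁻¹ ^ n * 1 :=
        by gcongr; exact hν1 n
      _ = (2:ENNReal)⁻¹ ^ n := mul_one _
  haveI : IsFiniteMeasure μ :=
    ⟨lt_of_le_of_lt hμuniv (by norm_num)⟩
  have hatom : ∀ x : ℝ, μ {x} = 0 := by
    intro x
    rw [hμapp _ (measurableSet_singleton x)]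
    simp [hν2]
  have hHc : μ Hᶜ = 0 := by
    rw [hμapp _ hc.measurableSet.compl]
    simp [hν3]
  have hgap : ∀ p q : ℚ, (H ∩ Ioo (p:ℝ) (q:ℝ)).Nonempty →
      0 < μ (Ioc (p:ℝ) (q:ℝ)) := by
    intro p q hne
    obtain ⟨n, hprn⟩ := hpr (p, q)
    rw [hμapp _ measurableSet_Ioc]
    have hν : ν n (Ioc (p:ℝ) (q:ℝ)) = 1 := by
      have := hν4 n (by rw [hprn]; exact hne)
      rwa [hprn] at this
    have hterm : (0:ENNReal) < (2:ENNReal)⁻¹ ^ n * ν n (Ioc (p:ℝ) (q:ℝ)) := by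
      rw [hν, mul_one]
      exact ENNReal.pow_pos (by simp) n
    exact lt_of_lt_of_le hterm (ENNReal.le_tsum n)
  -- total mass is positive
  have hH01 : (H ∩ Ioo (0:ℝ) (1:ℝ)).Nonempty := by
    have hacc := hperf.acc 0 h0
    rw [accPt_iff_nhds] at hacc
    obtain ⟨y, ⟨hyU, hyH⟩, hy0⟩ := hacc (Ioo (-1) 1) (isOpen_Ioo.mem_nhds (by norm_num))
    refine ⟨y, hyH, ?_, hyU.2⟩
    rcases (hH1 hyH).1.lt_or_eq with h | h
    · exact h
    · exact absurd h.symm hy0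
  have hTpos : 0 < μ univ :=
    lt_of_lt_of_le (hgap 0 1 (by push_cast; exact hH01)) (measure_mono (subset_univ _))
  set T : ℝ := (μ univ).toReal with hTdef
  have hT : 0 < T := ENNReal.toReal_pos (ne_of_gt hTpos) (measure_ne_top μ _)
  set F : ℝ → ℝ := fun x => (μ (Iic x)).toReal with hFdef
  have hFmono : Monotone F := fun a b hab =>
    ENNReal.toReal_mono (measure_ne_top μ _) (measure_mono (Iic_subset_Iic.mpr hab))
  refine ⟨fun x => F x / T, (aux_cont μ hatom).div_const T, ?_, ?_, ?_, ?_, ?_⟩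
  · intro a b hab
    exact (div_le_div_iff_of_pos_right hT).mpr (hFmono hab)
  · intro x hx
    have : μ (Iic x) = 0 := by
      refine measure_mono_null (fun t ht => ?_) (measure_union_null hHc (hatom 0))
      by_cases htH : t ∈ H
      · have := (hH1 htH).1
        have ht0 : t = 0 := le_antisymm (le_trans ht hx) this
        exact Or.inr (by simp [ht0])
      · exact Or.inl htH
    simp [hFdef, this]
  · intro x hx
    have hIoi : μ (Ioi x) = 0 := by
      refine measure_mono_null (fun t ht => ?_) hHc
      intro htH
      exact absurd (hH1 htH).2 (not_le.mpr (lt_of_lt_of_le (lt_of_le_of_lt hx ht) le_rfl))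
    have : μ (Iic x) = μ univ := by
      refine le_antisymm (measure_mono (subset_univ _)) ?_
      calc μ univ = μ (Iic x ∪ Ioi x) := by rw [Iic_union_Ioi]
        _ ≤ μ (Iic x) + μ (Ioi x) := measure_union_le _ _
        _ = μ (Iic x) := by rw [hIoi, add_zero]
    simp only [hFdef]
    rw [this]
    exact div_self (ne_of_gt hT)
  · intro x hx
    obtain ⟨ε, hε, hball⟩ := Metric.isOpen_iff.mp hc.isOpen_compl x hx
    refine ⟨Metric.ball x ε, Metric.isOpen_ball, Metric.mem_ball_self hε, fun y hy => ?_⟩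
    have hFeq : F y = F x := by
      rcases le_total x y with hxy | hxy
      · have hsub : Ioc x y ⊆ Hᶜ := by
          intro t ht
          apply hball
          rw [Metric.mem_ball, Real.dist_eq, abs_of_nonneg (by linarith [ht.1.le])]
          rw [Metric.mem_ball, Real.dist_eq] at hy
          have := abs_lt.mp hy
          linarith [ht.2, this.1, this.2]
        have := cdf_diff μ hxy
        rw [measure_mono_null hsub hHc, ENNReal.toReal_zero] at this
        simp only [hFdef]
        linarith [this]
      · have hsub : Ioc y x ⊆ Hᶜ := by
          intro t ht
          apply hball
          rw [Metric.mem_ball, Real.dist_eq]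
          rw [Metric.mem_ball, Real.dist_eq] at hy
          have h2 := abs_lt.mp hy
          rw [abs_lt]
          constructor <;> linarith [ht.1, ht.2]
        have := cdf_diff μ hxy
        rw [measure_mono_null hsub hHc, ENNReal.toReal_zero] at this
        simp only [hFdef]
        linarith [this]
    show F y / T = F x / T
    rw [hFeq]
  · intro a b hab hne
    obtain ⟨t, htab, htH⟩ := hne
    obtain ⟨p, hap, hpt⟩ := exists_rat_btwn htab.1
    obtain ⟨q, htq, hqb⟩ := exists_rat_btwn htab.2
    have hkey : 0 < μ (Ioc (p:ℝ) (q:ℝ)) := hgap p q ⟨t, htH, hpt, htq⟩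
    have hlt : F (p:ℝ) < F (q:ℝ) := by
      have hd := cdf_diff μ (le_of_lt (lt_trans hpt htq))
      have hpos : 0 < (μ (Ioc (p:ℝ) (q:ℝ))).toReal := by
        exact ENNReal.toReal_pos (ne_of_gt hkey) (measure_ne_top μ _)
      simp only [hFdef] at *
      linarith
    refine ⟨(p:ℝ), ⟨hap, lt_trans hpt (lt_trans htq hqb)⟩,
            (q:ℝ), ⟨lt_trans (lt_trans hap hpt) htq, hqb⟩, ?_⟩
    exact ne_of_lt ((div_lt_div_iff_of_pos_right hT).mpr hlt)
end

section
/- Let K be an origin-symmetric planar convex body. Define φ on A(K) \ E(K) by letting φ(x) be the first point y in the positive (counterclockwise) direction along ∂K from x such that x ⊣ y and y ⊣ x. Then for every y ∈ ∂K, the fiber φ⁻¹({y}) has at most two elements, and φ is a Borel measurable map. -/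
open Set MeasureTheory Pointwise

/-- The point of `∂K` at polar angle `θ`. -/
noncomputable def bpt (K : Set Plane) (θ : ℝ) : Plane :=
  (gauge K (Real.cos θ, Real.sin θ))⁻¹ • ((Real.cos θ, Real.sin θ) : Plane)

/-- `y` is a mutually Birkhoff orthogonal boundary partner of `x`. -/
def Mut (K : Set Plane) (x y : Plane) : Prop :=
  y ∈ frontier K ∧ BOrth K x y ∧ BOrth K y x

section Basics

variable {K : Set Plane}

lemma SCB.zero_mem_int (hK : IsSymmConvexBody K) : (0 : Plane) ∈ interior K := by
  obtain ⟨hc, _, ⟨z, hz⟩, hs⟩ := hK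
  have hsub : -interior K ⊆ interior K := by
    apply interior_maximal _ isOpen_interior.neg
    intro w hw
    rw [Set.mem_neg] at hw
    rw [hs, Set.mem_neg]
    exact interior_subset hw
  have hz' : -z ∈ interior K := hsub (Set.neg_mem_neg.2 hz)
  have := hc.interior hz hz' (by norm_num : (0:ℝ) ≤ 1/2) (by norm_num : (0:ℝ) ≤ 1/2)
    (by norm_num : (1:ℝ)/2 + 1/2 = 1)
  simpa using this

lemma SCB.nhds0 (hK : IsSymmConvexBody K) : K ∈ nhds (0 : Plane) :=
  mem_interior_iff_mem_nhds.1 (SCB.zero_mem_int hK)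

lemma SCB.absorbent (hK : IsSymmConvexBody K) : Absorbent ℝ K :=
  absorbent_nhds_zero (SCB.nhds0 hK)

lemma SCB.gcont (hK : IsSymmConvexBody K) : Continuous (gauge K) :=
  continuous_gauge hK.1 (SCB.nhds0 hK)

lemma SCB.gfront (hK : IsSymmConvexBody K) {x : Plane} :
    x ∈ frontier K ↔ gauge K x = 1 :=
  (gauge_eq_one_iff_mem_frontier hK.1 (SCB.nhds0 hK)).symm

lemma SCB.gmem (hK : IsSymmConvexBody K) {x : Plane} :
    gauge K x ≤ 1 ↔ x ∈ K := by
  rw [gauge_le_one_iff_mem_closure hK.1 (SCB.nhds0 hK), hK.2.1.isClosed.closure_eq]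

lemma SCB.gint (hK : IsSymmConvexBody K) {x : Plane} :
    gauge K x < 1 ↔ x ∈ interior K :=
  gauge_lt_one_iff_mem_interior hK.1 (SCB.nhds0 hK)

lemma SCB.gneg (hK : IsSymmConvexBody K) (x : Plane) : gauge K (-x) = gauge K x :=
  gauge_neg (fun y hy => by rw [hK.2.2.2, Set.mem_neg, neg_neg]; exact hy) x

lemma SCB.gpos (hK : IsSymmConvexBody K) {x : Plane} (hx : x ≠ 0) : 0 < gauge K x :=
  (gauge_pos (SCB.absorbent hK)
    (NormedSpace.isVonNBounded_of_isBounded _ hK.2.1.isBounded)).2 hx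

lemma SCB.gadd (hK : IsSymmConvexBody K) (x y : Plane) :
    gauge K (x + y) ≤ gauge K x + gauge K y :=
  gauge_add_le hK.1 (SCB.absorbent hK) x y

lemma SCB.frontier_ne_zero (hK : IsSymmConvexBody K) {x : Plane} (hx : x ∈ frontier K) :
    x ≠ 0 := by
  intro h
  have h1 : gauge K x = 1 := (SCB.gfront hK).1 hx
  rw [h, gauge_zero] at h1
  norm_num at h1

end Basics

section Bpt

variable {K : Set Plane}

lemma unit_ne_zero (θ : ℝ) : ((Real.cos θ, Real.sin θ) : Plane) ≠ 0 := by
  intro h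
  have h1 : Real.cos θ = 0 := congrArg Prod.fst h
  have h2 : Real.sin θ = 0 := congrArg Prod.snd h
  have := Real.sin_sq_add_cos_sq θ
  rw [h1, h2] at this
  norm_num at this

lemma SCB.gauge_bpt (hK : IsSymmConvexBody K) (θ : ℝ) : gauge K (bpt K θ) = 1 := by
  have hpos := SCB.gpos hK (unit_ne_zero θ)
  unfold bpt
  rw [gauge_smul_of_nonneg (inv_nonneg.2 hpos.le)]
  exact inv_mul_cancel₀ hpos.ne'

lemma SCB.bpt_mem_frontier (hK : IsSymmConvexBody K) (θ : ℝ) : bpt K θ ∈ frontier K :=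
  (SCB.gfront hK).2 (SCB.gauge_bpt hK θ)

lemma SCB.bpt_ne_zero (hK : IsSymmConvexBody K) (θ : ℝ) : bpt K θ ≠ 0 :=
  SCB.frontier_ne_zero hK (SCB.bpt_mem_frontier hK θ)

lemma SCB.bpt_cont (hK : IsSymmConvexBody K) : Continuous (bpt K) := by
  have hc : Continuous fun θ : ℝ => ((Real.cos θ, Real.sin θ) : Plane) :=
    (Real.continuous_cos.prodMk Real.continuous_sin)
  exact ((SCB.gcont hK).comp hc |>.inv₀
    (fun θ => (SCB.gpos hK (unit_ne_zero θ)).ne')).smul hc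

lemma SCB.bpt_add_pi (hK : IsSymmConvexBody K) (θ : ℝ) : bpt K (θ + Real.pi) = - bpt K θ := by
  unfold bpt
  rw [Real.cos_add_pi, Real.sin_add_pi]
  have : ((-Real.cos θ, -Real.sin θ) : Plane) = -((Real.cos θ, Real.sin θ) : Plane) := rfl
  rw [this, SCB.gneg hK, smul_neg]

lemma SCB.bpt_periodic (hK : IsSymmConvexBody K) :
    Function.Periodic (bpt K) (2 * Real.pi) := by
  intro θ
  unfold bpt
  rw [Real.cos_add_two_pi, Real.sin_add_two_pi]

lemma SCB.bpt_eq_self (hK : IsSymmConvexBody K) {x : Plane} (hx : x ∈ frontier K) :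
    bpt K (Complex.arg ⟨x.1, x.2⟩) = x := by
  have hx0 : x ≠ 0 := SCB.frontier_ne_zero hK hx
  set z : ℂ := ⟨x.1, x.2⟩ with hz
  have hz0 : z ≠ 0 := by
    intro h
    apply hx0
    have h1 := congrArg Complex.re h
    have h2 := congrArg Complex.im h
    exact Prod.ext h1 h2
  have ha : 0 < ‖z‖ := norm_pos_iff.2 hz0
  have hcos : Real.cos (Complex.arg z) = x.1 / ‖z‖ := Complex.cos_arg hz0
  have hsin : Real.sin (Complex.arg z) = x.2 / ‖z‖ := Complex.sin_arg z
  have hu : ((Real.cos (Complex.arg z), Real.sin (Complex.arg z)) : Plane)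
      = (‖z‖)⁻¹ • x := by
    rw [hcos, hsin]
    ext <;> simp [div_eq_inv_mul]
  unfold bpt
  rw [hu, gauge_smul_of_nonneg (inv_nonneg.2 ha.le), smul_eq_mul, (SCB.gfront hK).1 hx,
    mul_one, inv_inv, smul_smul, mul_inv_cancel₀ ha.ne', one_smul]

end Bpt

section MutLemmas

variable {K : Set Plane}

lemma BOrth.neg_left (hK : IsSymmConvexBody K) {x y : Plane} (h : BOrth K x y) :
    BOrth K (-x) y := by
  intro t
  have : -x + t • y = -(x + (-t) • y) := by module
  rw [this, SCB.gneg hK, SCB.gneg hK]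
  exact h (-t)

lemma BOrth.neg_right (hK : IsSymmConvexBody K) {x y : Plane} (h : BOrth K x y) :
    BOrth K x (-y) := by
  intro t
  have : x + t • (-y) = x + (-t) • y := by module
  rw [this]
  exact h (-t)

lemma Mut.neg_left (hK : IsSymmConvexBody K) {x y : Plane} (h : Mut K x y) :
    Mut K (-x) y :=
  ⟨h.1, BOrth.neg_left hK h.2.1, BOrth.neg_right hK h.2.2⟩

lemma Mut.neg_right (hK : IsSymmConvexBody K) {x y : Plane} (h : Mut K x y) :
    Mut K x (-y) := by
  refine ⟨?_, BOrth.neg_right hK h.2.1, BOrth.neg_left hK h.2.2⟩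
  rw [SCB.gfront hK, SCB.gneg hK, ← SCB.gfront hK]
  exact h.1

lemma Mut.not_self (hK : IsSymmConvexBody K) {x : Plane} (hx : gauge K x = 1) :
    ¬ Mut K x x := by
  rintro ⟨-, h, -⟩
  have := h (-1)
  rw [hx] at this
  have hx0 : x + (-1 : ℝ) • x = 0 := by module
  rw [hx0, gauge_zero] at this
  norm_num at this

lemma SCB.mut_closed (hK : IsSymmConvexBody K) :
    IsClosed {p : ℝ × ℝ | Mut K (bpt K p.1) (bpt K p.2)} := by
  have heq : {p : ℝ × ℝ | Mut K (bpt K p.1) (bpt K p.2)} =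
      (⋂ s : ℝ, {p : ℝ × ℝ | 1 ≤ gauge K (bpt K p.1 + s • bpt K p.2)}) ∩
      (⋂ s : ℝ, {p : ℝ × ℝ | 1 ≤ gauge K (bpt K p.2 + s • bpt K p.1)}) := by
    ext p
    simp only [Set.mem_setOf_eq, Set.mem_inter_iff, Set.mem_iInter, Mut, BOrth,
      SCB.gauge_bpt hK]
    constructor
    · rintro ⟨-, h1, h2⟩
      exact ⟨h1, h2⟩
    · rintro ⟨h1, h2⟩
      exact ⟨SCB.bpt_mem_frontier hK _, h1, h2⟩
  rw [heq]
  have hb1 : Continuous fun p : ℝ × ℝ => bpt K p.1 :=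
    (SCB.bpt_cont hK).comp continuous_fst
  have hb2 : Continuous fun p : ℝ × ℝ => bpt K p.2 :=
    (SCB.bpt_cont hK).comp continuous_snd
  refine IsClosed.inter (isClosed_iInter fun s => ?_) (isClosed_iInter fun s => ?_)
  · exact isClosed_le continuous_const ((SCB.gcont hK).comp (hb1.add (hb2.const_smul s)))
  · exact isClosed_le continuous_const ((SCB.gcont hK).comp (hb2.add (hb1.const_smul s)))

end MutLemmas

section SInf

variable {K : Set Plane}

def Sset (K : Set Plane) (θ : ℝ) : Set ℝ := {t : ℝ | θ < t ∧ Mut K (bpt K θ) (bpt K t)}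

lemma SCB.Mset_closed (hK : IsSymmConvexBody K) (θ : ℝ) :
    IsClosed {t : ℝ | Mut K (bpt K θ) (bpt K t)} := by
  have : {t : ℝ | Mut K (bpt K θ) (bpt K t)} =
      (fun t : ℝ => ((θ, t) : ℝ × ℝ)) ⁻¹' {p : ℝ × ℝ | Mut K (bpt K p.1) (bpt K p.2)} := rfl
  rw [this]
  exact (SCB.mut_closed hK).preimage (continuous_const.prodMk continuous_id)

lemma Sset_bddBelow (θ : ℝ) : BddBelow (Sset K θ) := ⟨θ, fun t ht => ht.1.le⟩

lemma SCB.sInf_Sset_mem (hK : IsSymmConvexBody K) {θ : ℝ} (hne : (Sset K θ).Nonempty) :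
    sInf (Sset K θ) ∈ Sset K θ := by
  have hM : IsClosed {t : ℝ | Mut K (bpt K θ) (bpt K t)} := SCB.Mset_closed hK θ
  have hsub : Sset K θ ⊆ Set.Ioi θ ∩ {t : ℝ | Mut K (bpt K θ) (bpt K t)} :=
    fun t ht => ⟨ht.1, ht.2⟩
  have hcl : closure (Sset K θ) ⊆ Set.Ici θ ∩ {t : ℝ | Mut K (bpt K θ) (bpt K t)} := by
    apply closure_minimal _ (isClosed_Ici.inter hM)
    exact fun t ht => ⟨le_of_lt ht.1, ht.2⟩
  have hmem := hcl (csInf_mem_closure hne (Sset_bddBelow θ))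
  rcases eq_or_lt_of_le (Set.mem_Ici.1 hmem.1) with h | h
  · exfalso
    exact Mut.not_self hK (SCB.gauge_bpt hK θ) (by rw [← h] at hmem; exact hmem.2)
  · exact ⟨h, hmem.2⟩

lemma SCB.Sset_nonempty (hK : IsSymmConvexBody K) {θ : ℝ}
    (hA : bpt K θ ∈ Auerbach K) : (Sset K θ).Nonempty := by
  obtain ⟨-, w, hw, B1, B2⟩ := hA
  have hwt : bpt K (Complex.arg ⟨w.1, w.2⟩) = w := SCB.bpt_eq_self hK hw
  set t0 := Complex.arg ⟨w.1, w.2⟩ with ht0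
  have h2pi : (0:ℝ) < 2 * Real.pi := by positivity
  obtain ⟨n, hn⟩ := exists_nat_gt ((θ - t0) / (2 * Real.pi))
  have hgt : θ < t0 + n * (2 * Real.pi) := by
    have := (div_lt_iff₀ h2pi).1 hn
    linarith
  have hb : bpt K (t0 + n * (2 * Real.pi)) = w := by
    rw [((SCB.bpt_periodic hK).nat_mul n) t0, hwt]
  refine ⟨t0 + n * (2 * Real.pi), hgt, ?_⟩
  rw [hb]
  exact ⟨hw, B1, B2⟩

lemma SCB.mut_bpt_pi (hK : IsSymmConvexBody K) {x : Plane} (t : ℝ) :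
    Mut K x (bpt K (t + Real.pi)) ↔ Mut K x (bpt K t) := by
  rw [SCB.bpt_add_pi hK]
  constructor
  · intro h
    have := Mut.neg_right hK h
    rwa [neg_neg] at this
  · exact fun h => Mut.neg_right hK h

lemma SCB.mut_bpt_left (hK : IsSymmConvexBody K) {z : Plane} (θ : ℝ) :
    Mut K (bpt K (θ + Real.pi)) z ↔ Mut K (bpt K θ) z := by
  rw [SCB.bpt_add_pi hK]
  constructor
  · intro h
    have := Mut.neg_left hK h
    rwa [neg_neg] at this
  · exact fun h => Mut.neg_left hK h

lemma SCB.Sset_pi (hK : IsSymmConvexBody K) (θ t : ℝ) :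
    t ∈ Sset K (θ + Real.pi) ↔ t - Real.pi ∈ Sset K θ := by
  unfold Sset
  simp only [Set.mem_setOf_eq]
  constructor
  · rintro ⟨h1, h2⟩
    refine ⟨by linarith, ?_⟩
    rw [SCB.mut_bpt_left hK] at h2
    rw [← SCB.mut_bpt_pi hK (t - Real.pi), sub_add_cancel]
    exact h2
  · rintro ⟨h1, h2⟩
    refine ⟨by linarith, ?_⟩
    rw [SCB.mut_bpt_left hK]
    rw [← sub_add_cancel t Real.pi, SCB.mut_bpt_pi hK]
    exact h2

lemma SCB.sInf_Sset_pi (hK : IsSymmConvexBody K) {θ : ℝ} (hne : (Sset K θ).Nonempty) :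
    sInf (Sset K (θ + Real.pi)) = sInf (Sset K θ) + Real.pi := by
  have ha := SCB.sInf_Sset_mem hK hne
  set a := sInf (Sset K θ)
  have hmem : a + Real.pi ∈ Sset K (θ + Real.pi) := by
    rw [SCB.Sset_pi hK, add_sub_cancel_right]
    exact ha
  apply le_antisymm
  · exact csInf_le (Sset_bddBelow _) hmem
  · apply le_csInf ⟨a + Real.pi, hmem⟩
    intro b hb
    rw [SCB.Sset_pi hK] at hb
    have : a ≤ b - Real.pi := csInf_le (Sset_bddBelow θ) hb
    linarith

end SInf

section Geometry

variable {K : Set Plane}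

/-- cross product functional with `y`. -/
def crossf (y v : Plane) : ℝ := v.1 * y.2 - v.2 * y.1

lemma crossf_smul (y v : Plane) (a : ℝ) : crossf y (a • v) = a * crossf y v := by
  simp only [crossf, Prod.smul_fst, Prod.smul_snd, smul_eq_mul]
  ring

lemma crossf_sub (y v w : Plane) : crossf y (v - w) = crossf y v - crossf y w := by
  simp only [crossf, Prod.fst_sub, Prod.snd_sub]
  ring

lemma crossf_neg (y v : Plane) : crossf y (-v) = - crossf y v := by
  simp only [crossf, Prod.fst_neg, Prod.snd_neg]
  ring

lemma crossf_ker {y v : Plane} (hy : y ≠ 0) (h : crossf y v = 0) : ∃ s : ℝ, v = s • y := by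
  unfold crossf at h
  by_cases h1 : y.1 ≠ 0
  · refine ⟨v.1 / y.1, ?_⟩
    have h2 : v.2 = v.1 / y.1 * y.2 := by field_simp; linarith
    refine Prod.ext ?_ ?_
    · simp only [Prod.smul_fst, smul_eq_mul]
      field_simp
    · simp only [Prod.smul_snd, smul_eq_mul]
      exact h2
  · push_neg at h1
    have h2 : y.2 ≠ 0 := by
      intro h2
      exact hy (Prod.ext h1 h2)
    refine ⟨v.2 / y.2, ?_⟩
    have h3 : v.1 = v.2 / y.2 * y.1 := by field_simp; linarith
    refine Prod.ext ?_ ?_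
    · simp only [Prod.smul_fst, smul_eq_mul]
      exact h3
    · simp only [Prod.smul_snd, smul_eq_mul]
      field_simp

lemma crossf_line {y v w : Plane} (hy : y ≠ 0) (h : crossf y v = crossf y w) :
    ∃ s : ℝ, v = w + s • y := by
  obtain ⟨s, hs⟩ := crossf_ker hy (by rw [crossf_sub, h, sub_self] : crossf y (v - w) = 0)
  exact ⟨s, by rw [← hs]; abel⟩

lemma crossf_ne_zero (hK : IsSymmConvexBody K) {x y : Plane} (hy : y ≠ 0)
    (hx : gauge K x = 1) (hB : BOrth K x y) : crossf y x ≠ 0 := by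
  intro h
  obtain ⟨s, rfl⟩ := crossf_ker hy h
  have := hB (-s)
  have hz : s • y + (-s) • y = 0 := by module
  rw [hz, gauge_zero, hx] at this
  norm_num at this

/-- support-slab lemma: if the line through `x1` in direction `y` avoids the interior,
then `K` lies in the half-plane `crossf y · ≤ crossf y x1` (when that value is positive). -/
lemma slab (hK : IsSymmConvexBody K) {x1 y : Plane} (hy : y ≠ 0)
    (hx : gauge K x1 = 1) (hB : BOrth K x1 y) (hc : 0 < crossf y x1) :
    ∀ z ∈ K, crossf y z ≤ crossf y x1 := by
  intro z hz
  by_contra hgt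
  push_neg at hgt
  set t : ℝ := crossf y x1 / crossf y z with ht
  have hz0 : 0 < crossf y z := lt_trans hc hgt
  have ht0 : 0 < t := div_pos hc hz0
  have ht1 : t < 1 := (div_lt_one hz0).2 hgt
  have hfp : crossf y (t • z) = crossf y x1 := by
    rw [crossf_smul, ht]
    field_simp
  have hpint : t • z ∈ interior K := by
    have := hK.1.combo_interior_closure_mem_interior (SCB.zero_mem_int hK)
      (subset_closure hz) (by linarith : 0 < 1 - t) ht0.le (by ring)
    simpa using this
  have hlt : gauge K (t • z) < 1 := (SCB.gint hK).2 hpint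
  obtain ⟨s, hs⟩ := crossf_line hy hfp
  have := hB s
  rw [hx, ← hs] at this
  linarith

lemma crossf_abs_eq (hK : IsSymmConvexBody K) {y x1 x2 : Plane} (hy : y ≠ 0)
    (h1 : gauge K x1 = 1) (hB1 : BOrth K x1 y)
    (h2 : gauge K x2 = 1) (hB2 : BOrth K x2 y) :
    |crossf y x1| = |crossf y x2| := by
  have key : ∀ u v : Plane, gauge K u = 1 → BOrth K u y → gauge K v = 1 → BOrth K v y →
      |crossf y v| ≤ |crossf y u| := by
    intro u v hu hBu hv hBv
    set u' : Plane := if 0 < crossf y u then u else -u with hu'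
    have hgu' : gauge K u' = 1 := by
      rw [hu']
      split_ifs
      · exact hu
      · rw [SCB.gneg hK]; exact hu
    have hBu' : BOrth K u' y := by
      rw [hu']
      split_ifs
      · exact hBu
      · exact BOrth.neg_left hK hBu
    have hcu' : crossf y u' = |crossf y u| := by
      rcases lt_trichotomy 0 (crossf y u) with h | h | h
      · rw [hu', if_pos h, abs_of_pos h]
      · exact absurd h.symm (crossf_ne_zero hK hy hu hBu)
      · rw [hu', if_neg (by linarith), crossf_neg, abs_of_neg h]
    have hpos : 0 < crossf y u' := by
      rw [hcu']
      exact abs_pos.2 (crossf_ne_zero hK hy hu hBu)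
    have hvK : v ∈ K := (SCB.gmem hK).1 hv.le
    have hvK' : -v ∈ K := by
      rw [hK.2.2.2, Set.mem_neg, neg_neg]
      exact hvK
    have e1 := slab hK hy hgu' hBu' hpos v hvK
    have e2 := slab hK hy hgu' hBu' hpos (-v) hvK'
    rw [crossf_neg] at e2
    rw [← hcu']
    rw [abs_le]
    constructor <;> linarith
  exact le_antisymm (key x2 x1 h2 hB2 h1 hB1) (key x1 x2 h1 hB1 h2 hB2)

lemma mid_mem_segUnion (hK : IsSymmConvexBody K) {x1 y : Plane} (hy : y ≠ 0)
    (hline : ∀ t : ℝ, 1 ≤ gauge K (x1 + t • y)) {a m b : ℝ}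
    (hga : gauge K (x1 + a • y) ≤ 1) (hgb : gauge K (x1 + b • y) ≤ 1)
    (h1 : a < m) (h2 : m < b) : x1 + m • y ∈ SegUnion K := by
  set pa := x1 + a • y with hpa
  set pb := x1 + b • y with hpb
  have hab : a ≠ b := by linarith
  have hne : pa ≠ pb := by
    intro h
    rw [hpa, hpb] at h
    have h' : (a - b) • y = 0 := by
      have := sub_eq_zero.2 h
      rw [show x1 + a • y - (x1 + b • y) = (a - b) • y by module] at this
      exact this
    rcases smul_eq_zero.1 h' with h'' | h''
    · exact hab (by linarith [sub_eq_zero.1 (by linarith : a - b = 0)])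
    · exact hy h''
  have hcombo : ∀ α β : ℝ, 0 ≤ α → 0 ≤ β → α + β = 1 →
      α • pa + β • pb = x1 + (α * a + β * b) • y := by
    intro α β hα hβ hαβ
    rw [hpa, hpb]
    have : α • (x1 + a • y) + β • (x1 + b • y) = (α + β) • x1 + (α * a + β * b) • y := by
      module
    rw [this, hαβ, one_smul]
  refine ⟨pa, pb, hne, ?_, ?_⟩
  · intro z hz
    obtain ⟨α, β, hα, hβ, hαβ, rfl⟩ := hz
    have hle : gauge K (α • pa + β • pb) ≤ 1 := by
      calc gauge K (α • pa + β • pb) ≤ gauge K (α • pa) + gauge K (β • pb) :=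
            SCB.gadd hK _ _
        _ = α * gauge K pa + β * gauge K pb := by
            rw [gauge_smul_of_nonneg hα, gauge_smul_of_nonneg hβ, smul_eq_mul, smul_eq_mul]
        _ ≤ α * 1 + β * 1 := by
            gcongr <;> assumption
        _ = 1 := by linarith
    have hge : 1 ≤ gauge K (α • pa + β • pb) := by
      rw [hcombo α β hα hβ hαβ]
      exact hline _
    rw [SCB.gfront hK]
    exact le_antisymm hle hge
  · have hba : b - a ≠ 0 := by
      intro h
      linarith
    have hco : (b - m) / (b - a) * a + (m - a) / (b - a) * b = m := by
      field_simp
      ring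
    refine ⟨(b - m) / (b - a), (m - a) / (b - a), ?_, ?_, ?_, ?_⟩
    · exact div_pos (by linarith) (by linarith)
    · exact div_pos (by linarith) (by linarith)
    · rw [← add_div, show b - m + (m - a) = b - a by ring, div_self hba]
    · rw [hcombo _ _ (le_of_lt (div_pos (by linarith) (by linarith)))
        (le_of_lt (div_pos (by linarith) (by linarith)))
        (by rw [← add_div, show b - m + (m - a) = b - a by ring, div_self hba]), hco]

end Geometry

section LineThree

variable {K : Set Plane}

lemma line_three (hK : IsSymmConvexBody K) {y : Plane} (hy : y ≠ 0) {x1 x2 x3 : Plane}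
    (hg1 : gauge K x1 = 1) (hB1 : BOrth K x1 y) (hn1 : x1 ∉ SegUnion K)
    (hg2 : gauge K x2 = 1) (hn2 : x2 ∉ SegUnion K)
    (hg3 : gauge K x3 = 1) (hn3 : x3 ∉ SegUnion K)
    (hc12 : crossf y x1 = crossf y x2) (hc13 : crossf y x1 = crossf y x3)
    (h12 : x1 ≠ x2) (h13 : x1 ≠ x3) (h23 : x2 ≠ x3) : False := by
  have hline : ∀ t : ℝ, 1 ≤ gauge K (x1 + t • y) := by
    intro t
    have := hB1 t
    rwa [hg1] at this
  obtain ⟨s2, e2⟩ := crossf_line hy hc12.symm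
  obtain ⟨s3, e3⟩ := crossf_line hy hc13.symm
  have hzero : x1 + (0 : ℝ) • y = x1 := by rw [zero_smul, add_zero]
  have hs2 : s2 ≠ 0 := by
    intro h
    rw [h, hzero] at e2
    exact h12 e2.symm
  have hs3 : s3 ≠ 0 := by
    intro h
    rw [h, hzero] at e3
    exact h13 e3.symm
  have hs23 : s2 ≠ s3 := by
    intro h
    rw [h, ← e3] at e2
    exact h23 e2
  have g0 : gauge K (x1 + (0 : ℝ) • y) ≤ 1 := by rw [hzero, hg1]
  have gs2 : gauge K (x1 + s2 • y) ≤ 1 := by rw [← e2, hg2]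
  have gs3 : gauge K (x1 + s3 • y) ≤ 1 := by rw [← e3, hg3]
  have n0 : x1 + (0 : ℝ) • y ∉ SegUnion K := by rw [hzero]; exact hn1
  have ns2 : x1 + s2 • y ∉ SegUnion K := by rw [← e2]; exact hn2
  have ns3 : x1 + s3 • y ∉ SegUnion K := by rw [← e3]; exact hn3
  have key : ∀ a m b : ℝ, a < m → m < b → gauge K (x1 + a • y) ≤ 1 →
      gauge K (x1 + b • y) ≤ 1 → x1 + m • y ∉ SegUnion K → False :=
    fun a m b hm1 hm2 hga hgb hnm => hnm (mid_mem_segUnion hK hy hline hga hgb hm1 hm2)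
  rcases lt_trichotomy s2 s3 with h | h | h
  · rcases lt_trichotomy s2 0 with h2 | h2 | h2
    · rcases lt_trichotomy s3 0 with h3 | h3 | h3
      · exact key s2 s3 0 h h3 gs2 g0 ns3
      · exact hs3 h3
      · exact key s2 0 s3 h2 h3 gs2 gs3 n0
    · exact hs2 h2
    · exact key 0 s2 s3 h2 h g0 gs3 ns2
  · exact hs23 h
  · rcases lt_trichotomy s3 0 with h3 | h3 | h3
    · rcases lt_trichotomy s2 0 with h2 | h2 | h2
      · exact key s3 s2 0 h h2 gs3 g0 ns2
      · exact hs2 h2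
      · exact key s3 0 s2 h3 h2 gs3 gs2 n0
    · exact hs3 h3
    · exact key 0 s3 s2 h3 h g0 gs2 ns3

end LineThree

section Symmetry

variable {K : Set Plane}

lemma SCB.frontier_neg (hK : IsSymmConvexBody K) {x : Plane} (h : x ∈ frontier K) :
    -x ∈ frontier K := by
  rw [SCB.gfront hK, SCB.gneg hK, ← SCB.gfront hK]
  exact h

lemma SegUnion_neg (hK : IsSymmConvexBody K) {x : Plane} (h : x ∈ SegUnion K) :
    -x ∈ SegUnion K := by
  obtain ⟨a, b, hab, hseg, hx⟩ := h
  refine ⟨-a, -b, fun hh => hab (neg_injective hh), ?_, ?_⟩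
  · intro z hz
    obtain ⟨α, β, hα, hβ, hαβ, rfl⟩ := hz
    have heq : α • -a + β • -b = -(α • a + β • b) := by module
    rw [heq]
    exact SCB.frontier_neg hK (hseg ⟨α, β, hα, hβ, hαβ, rfl⟩)
  · obtain ⟨α, β, hα, hβ, hαβ, rfl⟩ := hx
    refine ⟨α, β, hα, hβ, hαβ, ?_⟩
    module

lemma D_neg (hK : IsSymmConvexBody K) {x : Plane}
    (hx : x ∈ Auerbach K \ SegUnion K) : -x ∈ Auerbach K \ SegUnion K := by
  obtain ⟨⟨hf, w, hw, B1, B2⟩, hnE⟩ := hx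
  refine ⟨⟨SCB.frontier_neg hK hf, w, hw, BOrth.neg_left hK B1, BOrth.neg_right hK B2⟩, ?_⟩
  intro h
  have := SegUnion_neg hK h
  rw [neg_neg] at this
  exact hnE this

end Symmetry

section Phi

variable {K : Set Plane} {φ : Plane → Plane}

/-- polar angle of a point -/
noncomputable def argP (x : Plane) : ℝ := Complex.arg ⟨x.1, x.2⟩

variable (hφ : ∀ θ : ℝ, bpt K θ ∈ Auerbach K \ SegUnion K →
      φ (bpt K θ) = bpt K (sInf {t : ℝ | θ < t ∧ Mut K (bpt K θ) (bpt K t)}))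

include hφ

lemma phi_eq (hK : IsSymmConvexBody K) {θ : ℝ}
    (h : bpt K θ ∈ Auerbach K \ SegUnion K) :
    φ (bpt K θ) = bpt K (sInf (Sset K θ)) := hφ θ h

lemma phi_mut (hK : IsSymmConvexBody K) {x : Plane}
    (hx : x ∈ Auerbach K \ SegUnion K) : Mut K x (φ x) := by
  have hb : bpt K (argP x) = x := SCB.bpt_eq_self hK hx.1.1
  have hA : bpt K (argP x) ∈ Auerbach K \ SegUnion K := by rw [hb]; exact hx
  have hne := SCB.Sset_nonempty hK hA.1
  have hm := (SCB.sInf_Sset_mem hK hne).2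
  rw [hb] at hm
  have he := phi_eq hφ hK hA
  rw [hb] at he
  rw [he]
  exact hm

lemma phi_neg (hK : IsSymmConvexBody K) {x : Plane}
    (hx : x ∈ Auerbach K \ SegUnion K) : φ (-x) = - φ x := by
  have hb : bpt K (argP x) = x := SCB.bpt_eq_self hK hx.1.1
  have hA : bpt K (argP x) ∈ Auerbach K \ SegUnion K := by rw [hb]; exact hx
  have hne := SCB.Sset_nonempty hK hA.1
  have h1 : bpt K (argP x + Real.pi) = -x := by rw [SCB.bpt_add_pi hK, hb]
  have hD' : bpt K (argP x + Real.pi) ∈ Auerbach K \ SegUnion K := by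
    rw [h1]
    exact D_neg hK hx
  have he2 := phi_eq hφ hK hD'
  rw [h1, SCB.sInf_Sset_pi hK hne, SCB.bpt_add_pi hK] at he2
  have he1 := phi_eq hφ hK hA
  rw [hb] at he1
  rw [he2, he1]

end Phi

section Fiber

variable {K : Set Plane} {φ : Plane → Plane}

lemma fiber_two (hK : IsSymmConvexBody K)
    (hφ : ∀ θ : ℝ, bpt K θ ∈ Auerbach K \ SegUnion K →
      φ (bpt K θ) = bpt K (sInf {t : ℝ | θ < t ∧ Mut K (bpt K θ) (bpt K t)}))
    (y : Plane) :
    ∃ S : Finset Plane, S.card ≤ 2 ∧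
      {x ∈ Auerbach K \ SegUnion K | φ x = y} ⊆ ↑S := by
  set F := {x ∈ Auerbach K \ SegUnion K | φ x = y} with hFdef
  rcases F.eq_empty_or_nonempty with hF | ⟨x0, hx0⟩
  · exact ⟨∅, by simp, by rw [hF]; simp⟩
  have hx0D : x0 ∈ Auerbach K \ SegUnion K := hx0.1
  have hx0y : φ x0 = y := hx0.2
  have hmut0 := phi_mut hφ hK hx0D
  rw [hx0y] at hmut0
  have hyf : y ∈ frontier K := hmut0.1
  have hy0 : y ≠ 0 := SCB.frontier_ne_zero hK hyf
  have hyny : y ≠ -y := by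
    intro h
    apply hy0
    have h2 : (2 : ℝ) • y = 0 := by rw [two_smul]; nth_rewrite 2 [h]; module
    rcases smul_eq_zero.1 h2 with h3 | h3
    · norm_num at h3
    · exact h3
  have hmem : ∀ x ∈ F, gauge K x = 1 ∧ BOrth K x y ∧ x ∉ SegUnion K := by
    intro x hx
    have hm := phi_mut hφ hK hx.1
    rw [hx.2] at hm
    exact ⟨(SCB.gfront hK).1 hx.1.1.1, hm.2.1, hx.1.2⟩
  have haf : ∀ x ∈ F, -x ∉ F := by
    intro x hx h
    have hneg := phi_neg hφ hK hx.1
    rw [h.2, hx.2] at hneg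
    exact hyny hneg
  obtain ⟨hg0, hB0, hn0⟩ := hmem x0 hx0
  set c : ℝ := |crossf y x0| with hcdef
  have hc : ∀ x ∈ F, |crossf y x| = c := by
    intro x hx
    obtain ⟨hg, hB, -⟩ := hmem x hx
    exact crossf_abs_eq hK hy0 hg hB hg0 hB0
  set W : Plane → Prop :=
    fun x => gauge K x = 1 ∧ BOrth K x y ∧ x ∉ SegUnion K ∧ crossf y x = c with hWdef
  have htwo : ∀ p q r : Plane, W p → W q → W r → p ≠ q → p ≠ r → q ≠ r → False := by
    intro p q r hp hq hr h1 h2 h3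
    exact line_three hK hy0 hp.1 hp.2.1 hp.2.2.1 hq.1 hq.2.2.1 hr.1 hr.2.2.1
      (hp.2.2.2.trans hq.2.2.2.symm) (hp.2.2.2.trans hr.2.2.2.symm) h1 h2 h3
  have hcov : ∃ p q : Plane, ∀ z, W z → z = p ∨ z = q := by
    by_cases hWe : ∃ p, W p
    · obtain ⟨p, hp⟩ := hWe
      by_cases hq : ∃ q, W q ∧ q ≠ p
      · obtain ⟨q, hq, hqp⟩ := hq
        refine ⟨p, q, fun z hz => ?_⟩
        by_contra hcon
        push_neg at hcon
        exact htwo p q z hp hq hz (Ne.symm hqp) (Ne.symm hcon.1) (Ne.symm hcon.2)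
      · push_neg at hq
        exact ⟨p, p, fun z hz => Or.inl (hq z hz)⟩
    · push_neg at hWe
      exact ⟨y, y, fun z hz => absurd hz (hWe z)⟩
  obtain ⟨p, q, hcov⟩ := hcov
  have hFc : ∀ x ∈ F, x = p ∨ x = q ∨ -x = p ∨ -x = q := by
    intro x hx
    obtain ⟨hg, hB, hnE⟩ := hmem x hx
    have habs := hc x hx
    have hcnn : 0 ≤ c := hcdef ▸ abs_nonneg _
    rcases (abs_eq hcnn).1 habs with h | h
    · rcases hcov x ⟨hg, hB, hnE, h⟩ with h' | h'
      · exact Or.inl h'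
      · exact Or.inr (Or.inl h')
    · have hWnx : W (-x) := by
        refine ⟨by rw [SCB.gneg hK]; exact hg, BOrth.neg_left hK hB, ?_, ?_⟩
        · intro hcon
          have := SegUnion_neg hK hcon
          rw [neg_neg] at this
          exact hnE this
        · rw [crossf_neg, h, neg_neg]
      rcases hcov (-x) hWnx with h' | h'
      · exact Or.inr (Or.inr (Or.inl h'))
      · exact Or.inr (Or.inr (Or.inr h'))
  classical
  set a : Plane := if p ∈ F then p else -p with hadef
  set b : Plane := if q ∈ F then q else -q with hbdef
  refine ⟨{a, b}, (Finset.card_insert_le _ _).trans (by simp), ?_⟩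
  intro x hx
  simp only [Finset.coe_insert, Finset.coe_singleton, Set.mem_insert_iff,
    Set.mem_singleton_iff]
  have hxF : x ∈ F := hx
  rcases hFc x hxF with h | h | h | h
  · left
    rw [hadef, if_pos (h ▸ hxF), h]
  · right
    rw [hbdef, if_pos (h ▸ hxF), h]
  · left
    have hpF : p ∉ F := by
      intro hcon
      exact haf x hxF (h ▸ hcon)
    rw [hadef, if_neg hpF, ← h, neg_neg]
  · right
    have hqF : q ∉ F := by
      intro hcon
      exact haf x hxF (h ▸ hcon)
    rw [hbdef, if_neg hqF, ← h, neg_neg]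

end Fiber

section Meas

variable {K : Set Plane}

noncomputable def gfun (K : Set Plane) (θ : ℝ) : ℝ := sInf (Sset K θ)

lemma proj_closed_gen (C : Set (ℝ × ℝ)) (hC : IsClosed C) (hi : ℝ → ℝ)
    (hhi : Continuous hi) :
    IsClosed {θ : ℝ | ∃ t ∈ Set.Icc θ (hi θ), (θ, t) ∈ C} := by
  apply IsSeqClosed.isClosed
  intro u θ hu hlim
  choose t ht hmut using hu
  obtain ⟨m, hm⟩ := hlim.bddBelow_range
  have hhilim : Filter.Tendsto (fun n => hi (u n)) Filter.atTop (nhds (hi θ)) :=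
    (hhi.continuousAt.tendsto).comp hlim
  obtain ⟨M, hM⟩ := hhilim.bddAbove_range
  have htmem : ∀ n, t n ∈ Set.Icc m M := fun n =>
    ⟨le_trans (hm (Set.mem_range_self n)) (ht n).1,
     le_trans (ht n).2 (hM (Set.mem_range_self n))⟩
  obtain ⟨t0, ht0mem, ψ, hψ, hψlim⟩ := isCompact_Icc.tendsto_subseq htmem
  have hul : Filter.Tendsto (u ∘ ψ) Filter.atTop (nhds θ) := hlim.comp hψ.tendsto_atTop
  have hpair : Filter.Tendsto (fun n => ((u (ψ n), t (ψ n)) : ℝ × ℝ)) Filter.atTop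
      (nhds (θ, t0)) := hul.prodMk_nhds hψlim
  have hC0 : (θ, t0) ∈ C :=
    hC.mem_of_tendsto hpair (Filter.Eventually.of_forall fun n => hmut (ψ n))
  have h1 : θ ≤ t0 := le_of_tendsto_of_tendsto' hul hψlim fun n => (ht (ψ n)).1
  have h2 : t0 ≤ hi θ :=
    le_of_tendsto_of_tendsto' hψlim ((hhi.continuousAt.tendsto).comp hul)
      fun n => (ht (ψ n)).2
  exact ⟨t0, ⟨h1, h2⟩, hC0⟩

lemma SCB.proj_closed (hK : IsSymmConvexBody K) (hi : ℝ → ℝ) (hhi : Continuous hi) :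
    IsClosed {θ : ℝ | ∃ t ∈ Set.Icc θ (hi θ), Mut K (bpt K θ) (bpt K t)} :=
  proj_closed_gen {p : ℝ × ℝ | Mut K (bpt K p.1) (bpt K p.2)} (SCB.mut_closed hK) hi hhi

lemma Sset_nonempty_iff (hK : IsSymmConvexBody K) (θ : ℝ) :
    (Sset K θ).Nonempty ↔
      ∃ t ∈ Set.Icc θ (θ + 2 * Real.pi), Mut K (bpt K θ) (bpt K t) := by
  have h2p : (0:ℝ) < 2 * Real.pi := by positivity
  constructor
  · rintro ⟨s, hs, hmut⟩
    set s' := toIocMod h2p θ s with hs'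
    have hmem := toIocMod_mem_Ioc h2p θ s
    have hbe : bpt K s' = bpt K s := by
      have : s' = s - toIocDiv h2p θ s • (2 * Real.pi) := rfl
      rw [this, zsmul_eq_mul]
      exact (SCB.bpt_periodic hK).sub_int_mul_eq _
    refine ⟨s', ⟨hmem.1.le, hmem.2⟩, ?_⟩
    rw [hbe]
    exact hmut
  · rintro ⟨s, ⟨hs1, hs2⟩, hmut⟩
    have hne : s ≠ θ := by
      intro h
      exact Mut.not_self hK (SCB.gauge_bpt hK θ) (h ▸ hmut)
    exact ⟨s, lt_of_le_of_ne hs1 (Ne.symm hne), hmut⟩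

lemma Sset_nonempty_closed (hK : IsSymmConvexBody K) :
    IsClosed {θ : ℝ | (Sset K θ).Nonempty} := by
  have heq : {θ : ℝ | (Sset K θ).Nonempty} =
      {θ : ℝ | ∃ t ∈ Set.Icc θ (θ + 2 * Real.pi), Mut K (bpt K θ) (bpt K t)} :=
    Set.ext fun θ => Sset_nonempty_iff hK θ
  rw [heq]
  exact SCB.proj_closed hK (fun θ => θ + 2 * Real.pi) (by continuity)

lemma gfun_measurable (hK : IsSymmConvexBody K) : Measurable (gfun K) := by
  apply measurable_of_Iic
  intro c
  have heq : gfun K ⁻¹' Set.Iic c =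
      {θ : ℝ | ∃ t ∈ Set.Icc θ c, Mut K (bpt K θ) (bpt K t)} ∪
      ({θ : ℝ | (Sset K θ).Nonempty}ᶜ ∩ {θ : ℝ | (0:ℝ) ≤ c}) := by
    ext θ
    simp only [Set.mem_preimage, Set.mem_Iic, Set.mem_union, Set.mem_inter_iff,
      Set.mem_compl_iff, Set.mem_setOf_eq]
    constructor
    · intro h
      by_cases hne : (Sset K θ).Nonempty
      · left
        have ham := SCB.sInf_Sset_mem hK hne
        exact ⟨gfun K θ, ⟨ham.1.le, h⟩, ham.2⟩
      · right
        refine ⟨hne, ?_⟩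
        rw [Set.not_nonempty_iff_eq_empty] at hne
        have : gfun K θ = 0 := by rw [gfun, hne, Real.sInf_empty]
        rw [this] at h
        exact h
    · rintro (⟨s, ⟨hs1, hs2⟩, hmut⟩ | ⟨hne, hc⟩)
      · have hne : s ≠ θ := by
          intro h
          exact Mut.not_self hK (SCB.gauge_bpt hK θ) (h ▸ hmut)
        have hmem : s ∈ Sset K θ := ⟨lt_of_le_of_ne hs1 (Ne.symm hne), hmut⟩
        exact le_trans (csInf_le (Sset_bddBelow θ) hmem) hs2
      · rw [Set.not_nonempty_iff_eq_empty] at hne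
        have : gfun K θ = 0 := by rw [gfun, hne, Real.sInf_empty]
        rw [this]
        exact hc
  rw [heq]
  refine MeasurableSet.union ?_ (MeasurableSet.inter ?_ ?_)
  · exact (SCB.proj_closed hK (fun _ => c) continuous_const).measurableSet
  · exact (Sset_nonempty_closed hK).measurableSet.compl
  · by_cases h : (0:ℝ) ≤ c
    · simp [h]
    · simp [h]

lemma argP_measurable : Measurable argP := by
  have h1 : Continuous fun v : Plane => (⟨v.1, v.2⟩ : ℂ) := by
    have heq : (fun v : Plane => (⟨v.1, v.2⟩ : ℂ))
        = fun v : Plane => (v.1 : ℂ) + (v.2 : ℂ) * Complex.I := by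
      funext v
      rw [Complex.mk_eq_add_mul_I]
    rw [heq]
    exact ((Complex.continuous_ofReal.comp continuous_fst).add
      ((Complex.continuous_ofReal.comp continuous_snd).mul continuous_const))
  exact Complex.measurable_arg.comp h1.measurable

end Meas


/-- The map `φ` sending `x ∈ A(K) \ E(K)` to the first mutually Birkhoff
orthogonal point in the positive direction has fibers of at most two points
and is Borel measurable. -/
theorem stmt_18 (K : Set Plane) (hK : IsSymmConvexBody K)
    (φ : Plane → Plane)
    (hφ : ∀ θ : ℝ, bpt K θ ∈ Auerbach K \ SegUnion K →
      φ (bpt K θ) = bpt K (sInf {t : ℝ | θ < t ∧ Mut K (bpt K θ) (bpt K t)})) :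
    (∀ y : Plane, ∃ S : Finset Plane, S.card ≤ 2 ∧
      {x ∈ Auerbach K \ SegUnion K | φ x = y} ⊆ ↑S) ∧
    Measurable (fun x : (Auerbach K \ SegUnion K : Set Plane) => φ x.val) := by
  constructor
  · exact fiber_two hK hφ
  · have heq : (fun x : (Auerbach K \ SegUnion K : Set Plane) => φ x.val)
        = fun x => bpt K (gfun K (argP x.val)) := by
      funext x
      have hx : x.val ∈ Auerbach K \ SegUnion K := x.2
      have hb : bpt K (argP x.val) = x.val := SCB.bpt_eq_self hK hx.1.1
      have he := phi_eq hφ hK (θ := argP x.val) (by rw [hb]; exact hx)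
      rw [hb] at he
      exact he
    rw [heq]
    exact (SCB.bpt_cont hK).measurable.comp
      ((gfun_measurable hK).comp (argP_measurable.comp measurable_subtype_coe))
end

section
/- In a normed plane, Birkhoff orthogonality between boundary points of the unit ball is 'cyclically monotone': if x₁, x₂ ∈ ∂K with x₂ in the open antipode-free arc from x₁ (positive direction), x₁ ⊣ y₁, x₂ ⊣ y₂ with y₁, y₂ ∈ ∂K chosen in the positive direction from x₁, x₂ respectively (within an antipode-free arc), then y₂ lies in the closed arc from y₁ to −x₁. -/
open Set MeasureTheory Pointwise

/-- If the cross product of `v` with a nonzero `y` vanishes, `v` is a multiple of `y`. -/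
lemma parallel_of_cross_eq_zero (v y : Plane) (hy : y ≠ 0)
    (h : v.1 * y.2 - v.2 * y.1 = 0) : ∃ t : ℝ, v = t • y := by
  rcases eq_or_ne y.1 0 with h1 | h1
  · have h2 : y.2 ≠ 0 := by
      intro h2; exact hy (Prod.ext h1 h2)
    refine ⟨v.2 / y.2, ?_⟩
    have hv1 : v.1 = 0 := by
      have h' : v.1 * y.2 = 0 := by rw [h1] at h; linarith
      exact (mul_eq_zero.1 h').resolve_right h2
    apply Prod.ext
    · simp [hv1, h1]
    · show v.2 = v.2 / y.2 * y.2
      field_simp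
  · refine ⟨v.1 / y.1, ?_⟩
    apply Prod.ext
    · show v.1 = v.1 / y.1 * y.1
      field_simp
    · show v.2 = v.1 / y.1 * y.2
      field_simp
      nlinarith [h]

/-- Supporting-line inequality from Birkhoff orthogonality. -/
lemma support_ineq (K : Set Plane) (_hK : IsSymmConvexBody K) (x y z : Plane)
    (hx : gauge K x = 1) (hb : BOrth K x y) (hy : y ≠ 0) (hz : z ∈ K)
    (hpos : 0 < x.1 * y.2 - x.2 * y.1) :
    z.1 * y.2 - z.2 * y.1 ≤ x.1 * y.2 - x.2 * y.1 := by
  by_contra h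
  push_neg at h
  set Dx := x.1 * y.2 - x.2 * y.1 with hDx
  set Dz := z.1 * y.2 - z.2 * y.1 with hDz
  have hDz0 : 0 < Dz := lt_trans hpos h
  set l := Dx / Dz with hl
  have hl0 : 0 < l := div_pos hpos hDz0
  have hl1 : l < 1 := (div_lt_one hDz0).2 h
  set w : Plane := l • z with hw
  -- w - x is parallel to y
  have hcross : (w - x).1 * y.2 - (w - x).2 * y.1 = 0 := by
    have : l * Dz = Dx := div_mul_cancel₀ Dx (ne_of_gt hDz0)
    simp only [hw, Prod.fst_sub, Prod.snd_sub, Prod.smul_fst, Prod.smul_snd, smul_eq_mul]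
    nlinarith [this]
  obtain ⟨t, ht⟩ := parallel_of_cross_eq_zero _ y hy hcross
  have hwx : w = x + t • y := by rw [← ht]; abel
  have h1 : (1 : ℝ) ≤ gauge K w := by
    rw [hwx]; rw [← hx]; exact hb t
  have h2 : gauge K w ≤ l := by
    rw [hw, gauge_smul_of_nonneg hl0.le z, smul_eq_mul]
    calc l * gauge K z ≤ l * 1 := by
          exact mul_le_mul_of_nonneg_left (gauge_le_one_of_mem hz) hl0.le
      _ = l := mul_one l
  linarith

lemma zero_mem_interior (K : Set Plane) (hK : IsSymmConvexBody K) :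
    (0 : Plane) ∈ interior K := by
  obtain ⟨hconv, _, ⟨p, hp⟩, hsymm⟩ := hK
  have hp' : -p ∈ interior K := by
    have hnegint : interior (-K) = -interior K :=
      (Homeomorph.neg Plane).preimage_interior K ▸ rfl
    have : interior K = -interior K := by
      conv_lhs => rw [hsymm]
      exact hnegint
    rw [this]
    simpa using hp
  have := hconv.interior hp hp' (by norm_num : (0:ℝ) ≤ 1/2)
    (by norm_num : (0:ℝ) ≤ 1/2) (by norm_num)
  simpa using this

/-- Cyclic monotonicity of Birkhoff orthogonality: if `x₂ = bpt θ₂` lies in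
the open antipode-free arc past `x₁ = bpt θ₁`, and `y₁ = bpt s₁`, `y₂ = bpt s₂`
are Birkhoff-orthogonal partners chosen in the positive direction within the
antipode-free arc, then `y₂` lies in the closed arc from `y₁` to `-x₁`. -/
theorem stmt_19 (K : Set Plane) (hK : IsSymmConvexBody K)
    (θ₁ θ₂ s₁ s₂ : ℝ) (h12 : θ₁ < θ₂) (h2pi : θ₂ < θ₁ + Real.pi)
    (hs₁ : s₁ ∈ Ioo θ₁ (θ₁ + Real.pi)) (hs₂ : s₂ ∈ Ioo θ₂ (θ₁ + Real.pi))
    (hb1 : BOrth K (bpt K θ₁) (bpt K s₁))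
    (hb2 : BOrth K (bpt K θ₂) (bpt K s₂)) :
    s₂ ∈ Icc s₁ (θ₁ + Real.pi) := by
  obtain ⟨hconv, hcomp, hint, hsymm⟩ := hK
  refine ⟨?_, hs₂.2.le⟩
  by_contra hlt
  push_neg at hlt
  -- setup
  have h0 : (0 : Plane) ∈ interior K := zero_mem_interior K ⟨hconv, hcomp, hint, hsymm⟩
  have hnhds : K ∈ nhds (0 : Plane) := mem_interior_iff_mem_nhds.1 h0
  have habs : Absorbent ℝ K := absorbent_nhds_zero hnhds
  have hbdd : Bornology.IsVonNBounded ℝ K :=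
    NormedSpace.isVonNBounded_iff ℝ |>.2 hcomp.isBounded
  set u : ℝ → Plane := fun θ => ((Real.cos θ, Real.sin θ) : Plane) with hu
  have hu0 : ∀ θ, u θ ≠ 0 := by
    intro θ h
    have h1 : Real.cos θ = 0 := congrArg Prod.fst h
    have h2 : Real.sin θ = 0 := congrArg Prod.snd h
    nlinarith [Real.sin_sq_add_cos_sq θ]
  set r : ℝ → ℝ := fun θ => gauge K (u θ) with hr
  have hrpos : ∀ θ, 0 < r θ := fun θ => (gauge_pos habs hbdd).2 (hu0 θ)
  have hbptdef : ∀ θ, bpt K θ = (r θ)⁻¹ • u θ := fun θ => rfl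
  have hg1 : ∀ θ, gauge K (bpt K θ) = 1 := by
    intro θ
    rw [hbptdef, gauge_smul_of_nonneg (inv_nonneg.2 (hrpos θ).le), smul_eq_mul]
    exact inv_mul_cancel₀ (ne_of_gt (hrpos θ))
  have hmem : ∀ θ, bpt K θ ∈ K := by
    intro θ
    have := (gauge_le_one_iff_mem_closure hconv hnhds).1 (le_of_eq (hg1 θ))
    rwa [hcomp.isClosed.closure_eq] at this
  have hne : ∀ θ, bpt K θ ≠ 0 := by
    intro θ h
    have := hg1 θ
    rw [h, gauge_zero] at this
    norm_num at this
  -- cross product formula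
  have hcrossf : ∀ α β : ℝ,
      (bpt K α).1 * (bpt K β).2 - (bpt K α).2 * (bpt K β).1
        = (r α)⁻¹ * (r β)⁻¹ * Real.sin (β - α) := by
    intro α β
    simp only [hbptdef, hu, Prod.smul_fst, Prod.smul_snd, smul_eq_mul, Real.sin_sub]
    ring
  have pi_pos := Real.pi_pos
  -- positive sines
  have sin1 : 0 < Real.sin (s₁ - θ₁) :=
    Real.sin_pos_of_pos_of_lt_pi (by linarith [hs₁.1]) (by linarith [hs₁.2])
  have sin2 : 0 < Real.sin (s₂ - θ₂) :=
    Real.sin_pos_of_pos_of_lt_pi (by linarith [hs₂.1]) (by linarith [hs₂.2])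
  have sin3 : 0 < Real.sin (s₁ - θ₂) :=
    Real.sin_pos_of_pos_of_lt_pi (by linarith [hs₂.1]) (by linarith [hs₁.2])
  have sin4 : 0 < Real.sin (s₂ - θ₁) :=
    Real.sin_pos_of_pos_of_lt_pi (by linarith [hs₂.1]) (by linarith [hs₂.2])
  have sinu : 0 < Real.sin (s₁ - s₂) :=
    Real.sin_pos_of_pos_of_lt_pi (by linarith) (by linarith [hs₁.2, hs₂.1])
  have sinv : 0 < Real.sin (θ₂ - θ₁) :=
    Real.sin_pos_of_pos_of_lt_pi (by linarith) (by linarith)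
  -- supporting inequalities
  have ineq1 : (r θ₂)⁻¹ * (r s₁)⁻¹ * Real.sin (s₁ - θ₂)
      ≤ (r θ₁)⁻¹ * (r s₁)⁻¹ * Real.sin (s₁ - θ₁) := by
    have := support_ineq K ⟨hconv, hcomp, hint, hsymm⟩ (bpt K θ₁) (bpt K s₁) (bpt K θ₂)
      (hg1 θ₁) hb1 (hne s₁) (hmem θ₂)
      (by rw [hcrossf]
          exact mul_pos (mul_pos (inv_pos.2 (hrpos θ₁)) (inv_pos.2 (hrpos s₁))) sin1)
    rwa [hcrossf, hcrossf] at this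
  have ineq2 : (r θ₁)⁻¹ * (r s₂)⁻¹ * Real.sin (s₂ - θ₁)
      ≤ (r θ₂)⁻¹ * (r s₂)⁻¹ * Real.sin (s₂ - θ₂) := by
    have := support_ineq K ⟨hconv, hcomp, hint, hsymm⟩ (bpt K θ₂) (bpt K s₂) (bpt K θ₁)
      (hg1 θ₂) hb2 (hne s₂) (hmem θ₁)
      (by rw [hcrossf]
          exact mul_pos (mul_pos (inv_pos.2 (hrpos θ₂)) (inv_pos.2 (hrpos s₂))) sin2)
    rwa [hcrossf, hcrossf] at this
  -- clean inequalities
  have hA : (r θ₂)⁻¹ * Real.sin (s₁ - θ₂) ≤ (r θ₁)⁻¹ * Real.sin (s₁ - θ₁) := by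
    have hc := inv_pos.2 (hrpos s₁)
    have h := ineq1
    nlinarith [h, hc]
  have hB : (r θ₁)⁻¹ * Real.sin (s₂ - θ₁) ≤ (r θ₂)⁻¹ * Real.sin (s₂ - θ₂) := by
    have hc := inv_pos.2 (hrpos s₂)
    nlinarith [ineq2, hc]
  have hA0 : 0 ≤ (r θ₂)⁻¹ * Real.sin (s₁ - θ₂) :=
    mul_nonneg (inv_pos.2 (hrpos θ₂)).le sin3.le
  have hB0 : 0 ≤ (r θ₁)⁻¹ * Real.sin (s₂ - θ₁) :=
    mul_nonneg (inv_pos.2 (hrpos θ₁)).le sin4.le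
  have hprod : ((r θ₂)⁻¹ * Real.sin (s₁ - θ₂)) * ((r θ₁)⁻¹ * Real.sin (s₂ - θ₁))
      ≤ ((r θ₁)⁻¹ * Real.sin (s₁ - θ₁)) * ((r θ₂)⁻¹ * Real.sin (s₂ - θ₂)) :=
    mul_le_mul hA hB hB0 (le_trans hA0 hA)
  -- Plücker sine identity
  have hid : Real.sin (s₁ - θ₂) * Real.sin (s₂ - θ₁)
      = Real.sin (s₁ - θ₁) * Real.sin (s₂ - θ₂)
        + Real.sin (s₁ - s₂) * Real.sin (θ₂ - θ₁) := by
    simp only [Real.sin_sub]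
    ring
  have hr1 : 0 < (r θ₁)⁻¹ := inv_pos.2 (hrpos θ₁)
  have hr2 : 0 < (r θ₂)⁻¹ := inv_pos.2 (hrpos θ₂)
  nlinarith [hprod, hid, mul_pos hr1 hr2, mul_pos sinu sinv,
    mul_pos (mul_pos hr1 hr2) (mul_pos sinu sinv)]
end
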